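/- For all F,G ∈ dom S there holds the Green identity ⟨F,SG⟩_{L²(X¹,m¹)} − ⟨SF,G⟩_{L²(X¹,m¹)} = ⟨ΓF,Γ'G⟩_{ℓ²(X⁰,m⁰)} − ⟨Γ'F,ΓG⟩_{ℓ²(X⁰,m⁰)}. -/

import Mathlib

open MeasureTheory Set ENNReal

set_option linter.unusedSectionVars false

noncomputable section

/-- A weighted network: countable connected graph without loops or multiple edges,
equipped with positive conductances `c` satisfying `m⁰(x) = ∑_{y∼x} c(xy) < ∞`. -/
structure Network (V : Type) : Type where
  adj : V → V → Prop
  adj_symm : ∀ x y, adj x y → adj y x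
  adj_irrefl : ∀ x, ¬ adj x x
  adj_connected : ∀ x y, Relation.ReflTransGen adj x y
  c : V → V → ℝ
  c_symm : ∀ x y, c x y = c y x
  c_pos : ∀ x y, adj x y → 0 < c x y
  c_eq_zero : ∀ x y, ¬ adj x y → c x y = 0
  c_summable : ∀ x, Summable fun y => c x y

namespace Network

variable {V : Type} [Countable V] [MeasurableSpace V] [DiscreteMeasurableSpace V]

/-- The vertex weight `m⁰(x) = ∑_{y : y ∼ x} c(xy)`. -/
def m0 (N : Network V) (x : V) : ℝ := ∑' y, N.c x y

/-- The measure `m¹` on the metric graph `X¹`.  A point `((x,y),t)` represents the point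
at distance `t ∈ (0,1)` from `x` on the edge `[x,y]`; each edge appears with both
orientations, whence the factor `1/2`. -/
def edgeMeasure (N : Network V) : Measure ((V × V) × ℝ) :=
  Measure.sum fun e : V × V =>
    Measure.map (fun t => (e, t))
      ((ENNReal.ofReal (N.c e.1 e.2 / 2)) • (volume.restrict (Set.Ioo (0:ℝ) 1)))

/-- The identification `(xy,t) ≡ (yx,1-t)` of the two orientations of an edge. -/
def eFlip : (V × V) × ℝ → (V × V) × ℝ := fun p => ((p.1.2, p.1.1), 1 - p.2)

theorem measurable_eFlip : Measurable (eFlip (V := V)) := by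
  apply Measurable.prod
  · exact ((measurable_snd.comp measurable_fst).prodMk (measurable_fst.comp measurable_fst))
  · exact measurable_const.sub measurable_snd

theorem measurePreserving_eFlip (N : Network V) :
    MeasurePreserving (eFlip (V := V)) N.edgeMeasure N.edgeMeasure := by
  refine ⟨measurable_eFlip, ?_⟩
  ext s hs
  rw [Measure.map_apply measurable_eFlip hs, edgeMeasure,
    Measure.sum_apply _ (measurable_eFlip hs), Measure.sum_apply _ hs]
  have key : ∀ e : V × V,
      (Measure.map (fun t => (e, t))
        ((ENNReal.ofReal (N.c e.1 e.2 / 2)) • (volume.restrict (Set.Ioo (0:ℝ) 1))))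
          (eFlip ⁻¹' s)
      = (Measure.map (fun t => ((e.2, e.1), t))
        ((ENNReal.ofReal (N.c e.2 e.1 / 2)) • (volume.restrict (Set.Ioo (0:ℝ) 1)))) s := by
    intro e
    have hme : Measurable fun t : ℝ => (e, t) := measurable_prodMk_left
    have hme' : Measurable fun t : ℝ => ((e.2, e.1), t) := measurable_prodMk_left
    rw [Measure.map_apply hme (measurable_eFlip hs), Measure.map_apply hme' hs,
      Measure.smul_apply, Measure.smul_apply, N.c_symm e.1 e.2]
    congr 1
    have hpre : ((fun t : ℝ => (e, t)) ⁻¹' (eFlip ⁻¹' s))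
        = (fun t : ℝ => 1 - t) ⁻¹' ((fun t : ℝ => ((e.2, e.1), t)) ⁻¹' s) := by
      ext t; simp [eFlip]
    rw [hpre]
    have hmp : MeasurePreserving (fun t : ℝ => 1 - t)
        (volume.restrict (Set.Ioo (0:ℝ) 1)) (volume.restrict (Set.Ioo (0:ℝ) 1)) := by
      have h0 : MeasurePreserving (fun t : ℝ => 1 - t) volume volume :=
        Measure.measurePreserving_sub_left volume 1
      have h1 := h0.restrict_preimage (s := Set.Ioo (0:ℝ) 1) measurableSet_Ioo
      have h2 : (fun t : ℝ => 1 - t) ⁻¹' (Set.Ioo (0:ℝ) 1) = Set.Ioo (0:ℝ) 1 := by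
        ext t; constructor <;> (intro ht; simp only [Set.mem_preimage, Set.mem_Ioo] at *; constructor <;> linarith [ht.1, ht.2])
      rwa [h2] at h1
    exact (hmp.measure_preimage ((hme' hs).nullMeasurableSet)).symm ▸ rfl
  calc
    (∑' e : V × V,
        (Measure.map (fun t => (e, t))
          ((ENNReal.ofReal (N.c e.1 e.2 / 2)) • (volume.restrict (Set.Ioo (0:ℝ) 1))))
            (eFlip ⁻¹' s))
        = ∑' e : V × V,
          (Measure.map (fun t => ((e.2, e.1), t))
            ((ENNReal.ofReal (N.c e.2 e.1 / 2)) • (volume.restrict (Set.Ioo (0:ℝ) 1)))) s :=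
      tsum_congr key
    _ = ∑' e : V × V,
          (Measure.map (fun t => (e, t))
            ((ENNReal.ofReal (N.c e.1 e.2 / 2)) • (volume.restrict (Set.Ioo (0:ℝ) 1)))) s :=
      (Equiv.prodComm V V).tsum_eq fun e =>
        (Measure.map (fun t => (e, t))
          ((ENNReal.ofReal (N.c e.1 e.2 / 2)) • (volume.restrict (Set.Ioo (0:ℝ) 1)))) s

/-- The continuous linear map `F ↦ F ∘ σ` induced by the edge-orientation flip. -/
def flipOp (N : Network V) : Lp ℂ 2 N.edgeMeasure →L[ℂ] Lp ℂ 2 N.edgeMeasure :=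
  (Lp.compMeasurePreservingₗᵢ (E := ℂ) (p := 2) ℂ (eFlip (V := V))
    N.measurePreserving_eFlip).toContinuousLinearMap

/-- The Hilbert space `L²(X¹, m¹)` of square-integrable functions on the metric graph,
realized as the subspace of `L²` functions on oriented edges which are compatible with
the identification `(xy,t) ≡ (yx, 1-t)`. -/
def L2X (N : Network V) : Submodule ℂ (Lp ℂ 2 N.edgeMeasure) :=
  LinearMap.ker ((N.flipOp - ContinuousLinearMap.id ℂ (Lp ℂ 2 N.edgeMeasure) :
    Lp ℂ 2 N.edgeMeasure →ₗ[ℂ] Lp ℂ 2 N.edgeMeasure))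

theorem isClosed_L2X (N : Network V) : IsClosed (N.L2X : Set (Lp ℂ 2 N.edgeMeasure)) :=
  ContinuousLinearMap.isClosed_ker (N.flipOp - ContinuousLinearMap.id ℂ (Lp ℂ 2 N.edgeMeasure))

instance (N : Network V) : CompleteSpace N.L2X :=
  (isClosed_L2X N).completeSpace_coe

end Network

namespace Network

variable {V : Type} [Countable V] [MeasurableSpace V] [DiscreteMeasurableSpace V]

/-- The value of (a representative of) `F ∈ L²(X¹,m¹)` at the point of the edge `[x,y]`
at distance `t` from `x`. -/
def edgeFun (N : Network V) (F : Lp ℂ 2 N.edgeMeasure) (x y : V) (t : ℝ) : ℂ :=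
  F ((x, y), t)

/-- The counting measure on vertices weighted by `m⁰`; `ℓ²(X⁰,m⁰) = Lp ℂ 2 N.vertexMeasure`. -/
def vertexMeasure (N : Network V) : Measure V :=
  Measure.sum fun x => (ENNReal.ofReal (N.m0 x)) • Measure.dirac x

/-- The averaging operator, at the level of functions. -/
def avgFun (N : Network V) (f : V → V → ℝ → ℂ) (x y : V) (t : ℝ) : ℂ :=
  (N.m0 x : ℂ)⁻¹ * (∑' u, (N.c x u : ℂ) * (∫ s in (0:ℝ)..(1 - t), f x u s))
    + (N.m0 y : ℂ)⁻¹ * (∑' v, (N.c y v : ℂ) * (∫ s in (0:ℝ)..t, f y v s))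

/-- `f, g, h` are (continuous versions of) an element of `Ĥ²(X¹,m¹)` together with its first
and second edgewise derivatives: on each edge, `g` is the derivative of `f` and `h` the
derivative of `g` (in the sense of absolutely continuous functions, via the fundamental
theorem of calculus), and `f`, `g`, `h` are square-integrable on the metric graph. -/
structure IsH2Rep (N : Network V) (f g h : V → V → ℝ → ℂ) : Prop where
  ftc₁ : ∀ x y, N.adj x y → ∀ t ∈ Set.Icc (0:ℝ) 1,
    f x y t = f x y 0 + ∫ s in (0:ℝ)..t, g x y s
  ftc₂ : ∀ x y, N.adj x y → ∀ t ∈ Set.Icc (0:ℝ) 1,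
    g x y t = g x y 0 + ∫ s in (0:ℝ)..t, h x y s
  intervalIntegrable_g : ∀ x y, N.adj x y → IntervalIntegrable (g x y) volume 0 1
  intervalIntegrable_h : ∀ x y, N.adj x y → IntervalIntegrable (h x y) volume 0 1
  memL2_f : MemLp (fun p : (V × V) × ℝ => f p.1.1 p.1.2 p.2) 2 N.edgeMeasure
  memL2_g : MemLp (fun p : (V × V) × ℝ => g p.1.1 p.1.2 p.2) 2 N.edgeMeasure
  memL2_h : MemLp (fun p : (V × V) × ℝ => h p.1.1 p.1.2 p.2) 2 N.edgeMeasure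

/-- The graph of the operator `S = -d²/dt²` with domain the functions in `Ĥ²(X¹,m¹)` which are
continuous at the vertices: `(F, G) ∈ graph S` iff `F` has an edgewise `H²` representative
`f` (with derivatives `g`, `h`), `f` is continuous at each vertex, and `G = -f''`. -/
def SGraph (N : Network V) (F G : N.L2X) : Prop :=
  ∃ f g h : V → V → ℝ → ℂ, N.IsH2Rep f g h ∧
    (⇑(F : Lp ℂ 2 N.edgeMeasure) =ᵐ[N.edgeMeasure] fun p => f p.1.1 p.1.2 p.2) ∧
    (∀ x u v, N.adj x u → N.adj x v → f x u 0 = f x v 0) ∧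
    (⇑(G : Lp ℂ 2 N.edgeMeasure) =ᵐ[N.edgeMeasure] fun p => -(h p.1.1 p.1.2 p.2))

/-- The graph of the (Kirchhoff) Laplacian `L`: the restriction of `S` to the functions
satisfying moreover `F'(x) = ∑_{y∼x} c(xy) F'(xy,0+) = 0` at every vertex `x`. -/
def LGraph (N : Network V) (F G : N.L2X) : Prop :=
  ∃ f g h : V → V → ℝ → ℂ, N.IsH2Rep f g h ∧
    (⇑(F : Lp ℂ 2 N.edgeMeasure) =ᵐ[N.edgeMeasure] fun p => f p.1.1 p.1.2 p.2) ∧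
    (∀ x u v, N.adj x u → N.adj x v → f x u 0 = f x v 0) ∧
    (∀ x, Summable fun y => (N.c x y : ℂ) * g x y 0) ∧
    (∀ x, ∑' y, (N.c x y : ℂ) * g x y 0 = 0) ∧
    (⇑(G : Lp ℂ 2 N.edgeMeasure) =ᵐ[N.edgeMeasure] fun p => -(h p.1.1 p.1.2 p.2))

end Network

/-- The graph of the adjoint of a densely defined operator, described by its graph `T`:
`(G,K) ∈ graph T*` iff `⟪G, SF⟫ = ⟪K, F⟫` for all `(F, SF) ∈ T`. -/
def adjointGraph {H : Type*} [NormedAddCommGroup H] [InnerProductSpace ℂ H]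
    (T : Set (H × H)) : Set (H × H) :=
  {q | ∀ p ∈ T, (inner ℂ q.1 p.2 : ℂ) = inner ℂ q.2 p.1}

/-- A densely defined operator given by its graph `T` is self-adjoint if `T* = T`. -/
def IsSelfAdjointGraph {H : Type*} [NormedAddCommGroup H] [InnerProductSpace ℂ H]
    (T : Set (H × H)) : Prop :=
  Dense (Prod.fst '' T) ∧ adjointGraph T = T

/-- The entire function `Φ(z,t) = t` for `z = 0` and `sin(zt)/z` otherwise. -/
def Phi (z : ℂ) (t : ℝ) : ℂ := if z = 0 then (t : ℂ) else Complex.sin (z * t) / z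

namespace Network

variable {V : Type} [Countable V] [MeasurableSpace V] [DiscreteMeasurableSpace V]

/-- Iterated forward extension step for the d'Alembert extension: `fwdExt f n x y s`
represents `F̃(xy, s + n)` for `s ∈ (0,1]`. -/
def fwdExt (N : Network V) (f : V → V → ℝ → ℂ) : ℕ → V → V → ℝ → ℂ
  | 0 => f
  | (n+1) => fun x y s =>
      (2 / (N.m0 y) : ℂ) * ∑' v, (N.c y v : ℂ) * N.fwdExt f n y v s - N.fwdExt f n y x s

/-- Iterated backward extension step for the d'Alembert extension: `bwdExt f n x y s`
represents `F̃(xy, s - n)` for `s ∈ [0,1)`. -/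
def bwdExt (N : Network V) (f : V → V → ℝ → ℂ) : ℕ → V → V → ℝ → ℂ
  | 0 => f
  | (n+1) => fun x y s =>
      (2 / (N.m0 x) : ℂ) * ∑' u, (N.c x u : ℂ) * N.bwdExt f n u x s - N.bwdExt f n y x s

/-- The d'Alembert extension `F̃` of a function `F` on the metric graph: each edge component
`t ↦ F(xy,t)`, `t ∈ [0,1]`, is extended to the whole real line by the recursion
`F̃(xy,t) = (2/m⁰(y)) ∑_{v∼y} c(yv) F̃(yv,t-1) - F̃(yx,t-1)` for `t > 1` and
`F̃(xy,t) = (2/m⁰(x)) ∑_{u∼x} c(ux) F̃(ux,t+1) - F̃(yx,t+1)` for `t < 0`. -/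
def tilde (N : Network V) (f : V → V → ℝ → ℂ) (x y : V) (t : ℝ) : ℂ :=
  if 0 ≤ t ∧ t ≤ 1 then f x y t
  else if 1 < t then N.fwdExt f (⌈t⌉ - 1).toNat x y (t - ((⌈t⌉ - 1 : ℤ) : ℝ))
  else N.bwdExt f (-⌊t⌋).toNat x y (t + ((-⌊t⌋ : ℤ) : ℝ))

/-- The d'Alembert operator `C(τ)` at the level of functions. -/
def dAlembertFun (N : Network V) (f : V → V → ℝ → ℂ) (τ : ℝ) (x y : V) (t : ℝ) : ℂ :=
  (N.tilde f x y (t + τ) + N.tilde f x y (t - τ)) / 2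

/-- The squared norm `‖g‖²_{L²(X¹,m¹)} = (1/2) ∑_x ∑_{y} c(xy) ∫₀¹ |g(xy,t)|² dt`
(with values in `ℝ≥0∞`). -/
def normSq (N : Network V) (g : V → V → ℝ → ℂ) : ℝ≥0∞ :=
  (1/2 : ℝ≥0∞) * ∑' x, ∑' y, ENNReal.ofReal (N.c x y) *
    ∫⁻ t in Set.Ioo (0:ℝ) 1, ((‖g x y t‖₊ : ℝ≥0∞) ^ 2)

end Network

section GreenAux

open intervalIntegral

lemma ibp_core (u v : ℝ → ℂ) (hu : IntegrableOn u (Set.Ioc 0 1))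
    (hv : IntegrableOn v (Set.Ioc 0 1)) :
    (∫ t in (0:ℝ)..1, (∫ s in (0:ℝ)..t, u s) * v t)
      + ∫ t in (0:ℝ)..1, u t * (∫ s in (0:ℝ)..t, v s)
    = (∫ t in (0:ℝ)..1, u t) * (∫ t in (0:ℝ)..1, v t) := by
  set μ : Measure ℝ := volume.restrict (Set.Ioc (0:ℝ) 1) with hμ
  set F : ℝ × ℝ → ℂ := Set.indicator {p : ℝ × ℝ | p.1 ≤ p.2} (fun p => u p.1 * v p.2) with hF
  set G : ℝ × ℝ → ℂ := Set.indicator {p : ℝ × ℝ | p.1 ≤ p.2} (fun p => v p.1 * u p.2) with hG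
  have hT : MeasurableSet {p : ℝ × ℝ | p.1 ≤ p.2} :=
    measurableSet_le measurable_fst measurable_snd
  have hFi : Integrable F (μ.prod μ) := (hu.mul_prod hv).indicator hT
  have hGi : Integrable G (μ.prod μ) := (hv.mul_prod hu).indicator hT
  -- step 1 : the first integral
  have key1 : ∀ t ∈ Set.Ioc (0:ℝ) 1, (∫ s in (0:ℝ)..t, u s) * v t = ∫ s, F (s, t) ∂μ := by
    intro t ht
    have h1 : ∀ s, F (s, t) = Set.indicator (Set.Iic t) (fun s => u s * v t) s := by
      intro s
      by_cases h : s ≤ t <;>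
        simp [hF, Set.indicator_apply, h, Set.mem_Iic, Set.mem_setOf_eq]
    simp_rw [h1]
    rw [MeasureTheory.integral_indicator measurableSet_Iic, hμ, Measure.restrict_restrict measurableSet_Iic]
    have h2 : Set.Iic t ∩ Set.Ioc 0 1 = Set.Ioc 0 t := by
      ext s; simp only [Set.mem_inter_iff, Set.mem_Iic, Set.mem_Ioc]
      exact ⟨fun ⟨h3, h4, h5⟩ => ⟨h4, h3⟩, fun ⟨h4, h3⟩ => ⟨h3, h4, h3.trans ht.2⟩⟩
    rw [h2, MeasureTheory.integral_mul_const, intervalIntegral.integral_of_le ht.1.le]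
  have key2 : ∀ t ∈ Set.Ioc (0:ℝ) 1, u t * (∫ s in (0:ℝ)..t, v s) = ∫ s, G (s, t) ∂μ := by
    intro t ht
    have h1 : ∀ s, G (s, t) = Set.indicator (Set.Iic t) (fun s => v s * u t) s := by
      intro s
      by_cases h : s ≤ t <;>
        simp [hG, Set.indicator_apply, h, Set.mem_Iic, Set.mem_setOf_eq]
    simp_rw [h1]
    rw [MeasureTheory.integral_indicator measurableSet_Iic, hμ, Measure.restrict_restrict measurableSet_Iic]
    have h2 : Set.Iic t ∩ Set.Ioc 0 1 = Set.Ioc 0 t := by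
      ext s; simp only [Set.mem_inter_iff, Set.mem_Iic, Set.mem_Ioc]
      exact ⟨fun ⟨h3, h4, h5⟩ => ⟨h4, h3⟩, fun ⟨h4, h3⟩ => ⟨h3, h4, h3.trans ht.2⟩⟩
    rw [h2, MeasureTheory.integral_mul_const, intervalIntegral.integral_of_le ht.1.le, mul_comm]
  have e1 : (∫ t in (0:ℝ)..1, (∫ s in (0:ℝ)..t, u s) * v t) = ∫ t, (∫ s, F (s, t) ∂μ) ∂μ := by
    rw [intervalIntegral.integral_of_le (zero_le_one)]
    exact setIntegral_congr_fun measurableSet_Ioc key1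
  have e2 : (∫ t in (0:ℝ)..1, u t * (∫ s in (0:ℝ)..t, v s)) = ∫ t, (∫ s, G (s, t) ∂μ) ∂μ := by
    rw [intervalIntegral.integral_of_le (zero_le_one)]
    exact setIntegral_congr_fun measurableSet_Ioc key2
  have swapG : (∫ t, (∫ s, G (s, t) ∂μ) ∂μ) = ∫ t, (∫ s, G (t, s) ∂μ) ∂μ :=
    MeasureTheory.integral_integral_swap (f := fun t s => G (s, t)) hGi.swap
  rw [e1, e2, swapG]
  have m1 : Integrable (fun t => ∫ s, F (s, t) ∂μ) μ := hFi.swap.integral_prod_left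
  have m2 : Integrable (fun t => ∫ s, G (t, s) ∂μ) μ := hGi.integral_prod_left
  rw [← MeasureTheory.integral_add m1 m2]
  have hae : ∀ᵐ t ∂μ, (∫ s, F (s, t) ∂μ) + (∫ s, G (t, s) ∂μ) = (∫ s, u s ∂μ) * v t := by
    filter_upwards [hFi.swap.prod_right_ae, hGi.prod_right_ae] with t h1t h2t
    have h1t' : Integrable (fun s => F (s, t)) μ := h1t
    rw [← MeasureTheory.integral_add h1t' h2t]
    have hnull : μ {t} = 0 := by
      rw [hμ, Measure.restrict_apply (measurableSet_singleton t)]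
      exact measure_mono_null Set.inter_subset_left (Real.volume_singleton)
    have : (fun s => F (s, t) + G (t, s)) =ᵐ[μ] fun s => u s * v t := by
      refine (measure_mono_null ?_ hnull) 
      intro s hs
      simp only [Set.mem_setOf_eq] at hs
      by_contra hst
      rcases lt_or_gt_of_ne (fun h => hst (by simp [h]) : s ≠ t) with h | h
      · exact hs (by simp [hF, hG, Set.indicator_apply, Set.mem_setOf_eq, h.le, not_le.mpr h])
      · exact hs (by simp [hF, hG, Set.indicator_apply, Set.mem_setOf_eq, h.le, not_le.mpr h,
          mul_comm])
    rw [MeasureTheory.integral_congr_ae this, MeasureTheory.integral_mul_const]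
  rw [MeasureTheory.integral_congr_ae hae, MeasureTheory.integral_const_mul,
    intervalIntegral.integral_of_le (zero_le_one), intervalIntegral.integral_of_le (zero_le_one)]

lemma ibp (u v U V : ℝ → ℂ)
    (hu : IntervalIntegrable u volume 0 1) (hv : IntervalIntegrable v volume 0 1)
    (hU : ∀ t ∈ Set.Icc (0:ℝ) 1, U t = U 0 + ∫ s in (0:ℝ)..t, u s)
    (hV : ∀ t ∈ Set.Icc (0:ℝ) 1, V t = V 0 + ∫ s in (0:ℝ)..t, v s) :
    ∫ t in (0:ℝ)..1, (U t * v t + u t * V t) = U 1 * V 1 - U 0 * V 0 := by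
  have hPc : ContinuousOn (fun t => ∫ s in (0:ℝ)..t, u s) (Set.uIcc (0:ℝ) 1) :=
    intervalIntegral.continuousOn_primitive_interval (by
      rwa [Set.uIcc_of_le zero_le_one, ← intervalIntegrable_iff_integrableOn_Icc_of_le zero_le_one])
  have hQc : ContinuousOn (fun t => ∫ s in (0:ℝ)..t, v s) (Set.uIcc (0:ℝ) 1) :=
    intervalIntegral.continuousOn_primitive_interval (by
      rwa [Set.uIcc_of_le zero_le_one, ← intervalIntegrable_iff_integrableOn_Icc_of_le zero_le_one])
  have hicc : Set.uIcc (0:ℝ) 1 = Set.Icc (0:ℝ) 1 := Set.uIcc_of_le zero_le_one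
  have congr1 : Set.EqOn (fun t => U t * v t + u t * V t)
      (fun t => (U 0 * v t + u t * V 0) +
        ((∫ s in (0:ℝ)..t, u s) * v t + u t * (∫ s in (0:ℝ)..t, v s)))
      (Set.uIcc (0:ℝ) 1) := by
    intro t ht
    rw [hicc] at ht
    simp only [hU t ht, hV t ht]; ring
  rw [intervalIntegral.integral_congr congr1]
  have i1 : IntervalIntegrable (fun t => U 0 * v t) volume 0 1 := hv.const_mul _
  have i2 : IntervalIntegrable (fun t => u t * V 0) volume 0 1 := hu.mul_const _
  have i3 : IntervalIntegrable (fun t => (∫ s in (0:ℝ)..t, u s) * v t) volume 0 1 :=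
    hv.continuousOn_mul hPc
  have i4 : IntervalIntegrable (fun t => u t * (∫ s in (0:ℝ)..t, v s)) volume 0 1 :=
    hu.mul_continuousOn hQc
  rw [intervalIntegral.integral_add (i1.add i2) (i3.add i4),
    intervalIntegral.integral_add i1 i2, intervalIntegral.integral_add i3 i4,
    intervalIntegral.integral_const_mul, intervalIntegral.integral_mul_const]
  have hcore := ibp_core u v
    ((intervalIntegrable_iff_integrableOn_Ioc_of_le zero_le_one).mp hu)
    ((intervalIntegrable_iff_integrableOn_Ioc_of_le zero_le_one).mp hv)
  rw [hcore]
  have hU1 : U 1 = U 0 + ∫ s in (0:ℝ)..1, u s := hU 1 (by norm_num)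
  have hV1 : V 1 = V 0 + ∫ s in (0:ℝ)..1, v s := hV 1 (by norm_num)
  rw [hU1, hV1]; ring

lemma II.conj' {f : ℝ → ℂ} {a b : ℝ} (hf : IntervalIntegrable f volume a b) :
    IntervalIntegrable (fun t => (starRingEnd ℂ) (f t)) volume a b := by
  refine ⟨⟨continuous_star.comp_aestronglyMeasurable hf.1.1, ?_⟩,
    ⟨continuous_star.comp_aestronglyMeasurable hf.2.1, ?_⟩⟩
  · have := hf.1.2
    simpa [HasFiniteIntegral, RCLike.nnnorm_conj] using this
  · have := hf.2.2
    simpa [HasFiniteIntegral, RCLike.nnnorm_conj] using this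

lemma intervalIntegral_conj {f : ℝ → ℂ} {a b : ℝ} :
    ∫ t in a..b, (starRingEnd ℂ) (f t) = (starRingEnd ℂ) (∫ t in a..b, f t) := by
  simp only [intervalIntegral, integral_conj, map_sub]

lemma rep_continuousOn (f g : ℝ → ℂ) (hg : IntervalIntegrable g volume 0 1)
    (hf : ∀ t ∈ Set.Icc (0:ℝ) 1, f t = f 0 + ∫ s in (0:ℝ)..t, g s) :
    ContinuousOn f (Set.Icc (0:ℝ) 1) := by
  have hPc : ContinuousOn (fun t => f 0 + ∫ s in (0:ℝ)..t, g s) (Set.Icc (0:ℝ) 1) := by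
    refine continuousOn_const.add ?_
    have := intervalIntegral.continuousOn_primitive_interval (a := (0:ℝ)) (b := 1)
      (f := g) (μ := volume) (by
        rwa [Set.uIcc_of_le zero_le_one,
          ← intervalIntegrable_iff_integrableOn_Icc_of_le zero_le_one])
    rwa [Set.uIcc_of_le zero_le_one] at this
  exact hPc.congr hf

/-- Per-edge integration by parts. -/
lemma edge_ibp (f1 g1 h1 f2 g2 h2 : ℝ → ℂ)
    (hf1 : ∀ t ∈ Set.Icc (0:ℝ) 1, f1 t = f1 0 + ∫ s in (0:ℝ)..t, g1 s)
    (hg1 : ∀ t ∈ Set.Icc (0:ℝ) 1, g1 t = g1 0 + ∫ s in (0:ℝ)..t, h1 s)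
    (hg1i : IntervalIntegrable g1 volume 0 1) (hh1i : IntervalIntegrable h1 volume 0 1)
    (hf2 : ∀ t ∈ Set.Icc (0:ℝ) 1, f2 t = f2 0 + ∫ s in (0:ℝ)..t, g2 s)
    (hg2 : ∀ t ∈ Set.Icc (0:ℝ) 1, g2 t = g2 0 + ∫ s in (0:ℝ)..t, h2 s)
    (hg2i : IntervalIntegrable g2 volume 0 1) (hh2i : IntervalIntegrable h2 volume 0 1) :
    (∫ t in (0:ℝ)..1, (starRingEnd ℂ) (f1 t) * (-(h2 t)))
      - ∫ t in (0:ℝ)..1, (starRingEnd ℂ) (-(h1 t)) * f2 t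
    = ((starRingEnd ℂ) (f1 0) * g2 0 - (starRingEnd ℂ) (g1 0) * f2 0)
      - ((starRingEnd ℂ) (f1 1) * g2 1 - (starRingEnd ℂ) (g1 1) * f2 1) := by
  have hicc : Set.uIcc (0:ℝ) 1 = Set.Icc (0:ℝ) 1 := Set.uIcc_of_le zero_le_one
  have cf1 : ContinuousOn f1 (Set.Icc (0:ℝ) 1) := rep_continuousOn f1 g1 hg1i hf1
  have cg1 : ContinuousOn g1 (Set.Icc (0:ℝ) 1) := rep_continuousOn g1 h1 hh1i hg1
  have cf2 : ContinuousOn f2 (Set.Icc (0:ℝ) 1) := rep_continuousOn f2 g2 hg2i hf2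
  have cg2 : ContinuousOn g2 (Set.Icc (0:ℝ) 1) := rep_continuousOn g2 h2 hh2i hg2
  -- first IBP : ∫ (conj f1 * h2 + conj g1 * g2) = conj f1 1 * g2 1 - conj f1 0 * g2 0
  have hUrep : ∀ t ∈ Set.Icc (0:ℝ) 1, (starRingEnd ℂ) (f1 t)
      = (starRingEnd ℂ) (f1 0) + ∫ s in (0:ℝ)..t, (starRingEnd ℂ) (g1 s) := by
    intro t ht
    rw [intervalIntegral_conj, ← map_add, ← hf1 t ht]
  have hUrep' : ∀ t ∈ Set.Icc (0:ℝ) 1, (starRingEnd ℂ) (g1 t)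
      = (starRingEnd ℂ) (g1 0) + ∫ s in (0:ℝ)..t, (starRingEnd ℂ) (h1 s) := by
    intro t ht
    rw [intervalIntegral_conj, ← map_add, ← hg1 t ht]
  have ibpA := ibp (fun t => (starRingEnd ℂ) (g1 t)) h2
    (fun t => (starRingEnd ℂ) (f1 t)) g2 (II.conj' hg1i) hh2i hUrep hg2
  have ibpB := ibp (fun t => (starRingEnd ℂ) (h1 t)) g2
    (fun t => (starRingEnd ℂ) (g1 t)) f2 (II.conj' hh1i) hg2i hUrep' hf2
  have iA1 : IntervalIntegrable (fun t => (starRingEnd ℂ) (f1 t) * h2 t) volume 0 1 :=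
    hh2i.continuousOn_mul (by rw [hicc]; exact cf1.star)
  have iJ : IntervalIntegrable (fun t => (starRingEnd ℂ) (g1 t) * g2 t) volume 0 1 :=
    ((cg1.star.mul cg2).mono (by rw [hicc])).intervalIntegrable
  have iB1 : IntervalIntegrable (fun t => (starRingEnd ℂ) (h1 t) * f2 t) volume 0 1 :=
    (II.conj' hh1i).mul_continuousOn (by rw [hicc]; exact cf2)
  have splitA : (∫ t in (0:ℝ)..1, (starRingEnd ℂ) (f1 t) * h2 t)
      + (∫ t in (0:ℝ)..1, (starRingEnd ℂ) (g1 t) * g2 t)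
      = (starRingEnd ℂ) (f1 1) * g2 1 - (starRingEnd ℂ) (f1 0) * g2 0 := by
    rw [← intervalIntegral.integral_add iA1 iJ]
    exact ibpA
  have splitB : (∫ t in (0:ℝ)..1, (starRingEnd ℂ) (g1 t) * g2 t)
      + (∫ t in (0:ℝ)..1, (starRingEnd ℂ) (h1 t) * f2 t)
      = (starRingEnd ℂ) (g1 1) * f2 1 - (starRingEnd ℂ) (g1 0) * f2 0 := by
    rw [← intervalIntegral.integral_add iJ iB1]
    have : ∀ t, (starRingEnd ℂ) (g1 t) * g2 t + (starRingEnd ℂ) (h1 t) * f2 t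
        = (starRingEnd ℂ) (g1 t) * g2 t + (starRingEnd ℂ) (h1 t) * f2 t := fun _ => rfl
    exact ibpB
  have e1 : (∫ t in (0:ℝ)..1, (starRingEnd ℂ) (f1 t) * (-(h2 t)))
      = - ∫ t in (0:ℝ)..1, (starRingEnd ℂ) (f1 t) * h2 t := by
    rw [← intervalIntegral.integral_neg]
    congr 1; ext t; ring
  have e2 : (∫ t in (0:ℝ)..1, (starRingEnd ℂ) (-(h1 t)) * f2 t)
      = - ∫ t in (0:ℝ)..1, (starRingEnd ℂ) (h1 t) * f2 t := by
    rw [← intervalIntegral.integral_neg]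
    congr 1; ext t; simp [map_neg]
  rw [e1, e2]
  have hA := splitA
  have hB := splitB
  linear_combination -hA + hB

lemma II.mono' {E : Type*} [NormedAddCommGroup E] {f : ℝ → E}
    (hf : IntervalIntegrable f volume 0 1) {a b : ℝ} (ha : 0 ≤ a) (hb : b ≤ 1) (hab : a ≤ b) :
    IntervalIntegrable f volume a b :=
  hf.mono_set (by rw [Set.uIcc_of_le hab, Set.uIcc_of_le zero_le_one]; exact Set.Icc_subset_Icc ha hb)

set_option maxHeartbeats 1000000 in
/-- If `f1 t = f2 (1-t)` and both have AC representations, the derivative flips sign: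
`g1 1 = - g2 0`. -/
lemma gflip (f1 g1 h1 f2 g2 h2 : ℝ → ℂ)
    (hf1 : ∀ t ∈ Set.Icc (0:ℝ) 1, f1 t = f1 0 + ∫ s in (0:ℝ)..t, g1 s)
    (hg1 : ∀ t ∈ Set.Icc (0:ℝ) 1, g1 t = g1 0 + ∫ s in (0:ℝ)..t, h1 s)
    (hg1i : IntervalIntegrable g1 volume 0 1) (hh1i : IntervalIntegrable h1 volume 0 1)
    (hf2 : ∀ t ∈ Set.Icc (0:ℝ) 1, f2 t = f2 0 + ∫ s in (0:ℝ)..t, g2 s)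
    (hg2 : ∀ t ∈ Set.Icc (0:ℝ) 1, g2 t = g2 0 + ∫ s in (0:ℝ)..t, h2 s)
    (hg2i : IntervalIntegrable g2 volume 0 1) (hh2i : IntervalIntegrable h2 volume 0 1)
    (hsym : ∀ t ∈ Set.Icc (0:ℝ) 1, f1 t = f2 (1 - t)) :
    g1 1 = - g2 0 := by
  have key : ∀ t ∈ Set.Ioo (0:ℝ) 1, ‖g1 1 + g2 0‖
      ≤ (∫ s in t..(1:ℝ), ‖h1 s‖) + ∫ s in (0:ℝ)..(1 - t), ‖h2 s‖ := by
    intro t ht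
    have ht0 : (0:ℝ) < t := ht.1
    have ht1 : t < 1 := ht.2
    have h1i : IntervalIntegrable h1 volume t 1 := II.mono' hh1i ht0.le le_rfl ht1.le
    have h2i : IntervalIntegrable h2 volume 0 (1 - t) :=
      II.mono' hh2i le_rfl (by linarith) (by linarith)
    have hg1t : IntervalIntegrable g1 volume t 1 := II.mono' hg1i ht0.le le_rfl ht1.le
    have hg2t : IntervalIntegrable g2 volume 0 (1 - t) :=
      II.mono' hg2i le_rfl (by linarith) (by linarith)
    have rel : (∫ s in t..(1:ℝ), g1 s) = - ∫ s in (0:ℝ)..(1 - t), g2 s := by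
      have e1 : (∫ s in (0:ℝ)..t, g1 s) + (∫ s in t..(1:ℝ), g1 s) = ∫ s in (0:ℝ)..1, g1 s :=
        intervalIntegral.integral_add_adjacent_intervals
          (II.mono' hg1i le_rfl ht1.le ht0.le) hg1t
      have r1 : f1 t = f1 0 + ∫ s in (0:ℝ)..t, g1 s := hf1 t ⟨ht0.le, ht1.le⟩
      have r2 : f1 1 = f1 0 + ∫ s in (0:ℝ)..1, g1 s := hf1 1 (by norm_num)
      have s1 : f1 t = f2 0 + ∫ s in (0:ℝ)..(1 - t), g2 s := by
        rw [hsym t ⟨ht0.le, ht1.le⟩]; exact hf2 (1 - t) ⟨by linarith, by linarith⟩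
      have s2 : f1 1 = f2 0 := by
        have := hsym 1 (by norm_num)
        simpa using this
      have e3 : (∫ s in t..(1:ℝ), g1 s) = f1 1 - f1 t := by
        rw [r2, r1]; linear_combination e1
      rw [e3, s1, s2]; ring
    have b1 : ‖(∫ s in t..(1:ℝ), g1 s) - (1 - t) • g1 1‖
        ≤ (1 - t) * ∫ s in t..(1:ℝ), ‖h1 s‖ := by
      have hc : (∫ s in t..(1:ℝ), g1 1) = (1 - t) • g1 1 := by
        simp [intervalIntegral.integral_const]
      rw [← hc, ← intervalIntegral.integral_sub hg1t (intervalIntegrable_const)]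
      have hb : ∀ s ∈ Set.Icc t 1, ‖g1 s - g1 1‖ ≤ ∫ s' in t..(1:ℝ), ‖h1 s'‖ := by
        intro s hs
        have e2 : (∫ r in (0:ℝ)..s, h1 r) + (∫ r in s..(1:ℝ), h1 r) = ∫ r in (0:ℝ)..1, h1 r :=
          intervalIntegral.integral_add_adjacent_intervals
            (II.mono' hh1i le_rfl hs.2 (ht0.le.trans hs.1))
            (II.mono' hh1i (ht0.le.trans hs.1) le_rfl hs.2)
        have e4 : g1 s - g1 1 = - ∫ r in s..(1:ℝ), h1 r := by
          rw [hg1 s ⟨ht0.le.trans hs.1, hs.2⟩, hg1 1 (by norm_num)]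
          linear_combination e2
        rw [e4, norm_neg]
        calc ‖∫ r in s..(1:ℝ), h1 r‖ ≤ ∫ r in s..(1:ℝ), ‖h1 r‖ :=
              intervalIntegral.norm_integral_le_integral_norm hs.2
          _ ≤ ∫ r in t..(1:ℝ), ‖h1 r‖ := by
              apply intervalIntegral.integral_mono_interval hs.1 hs.2 le_rfl
              · filter_upwards with r using norm_nonneg _
              · exact h1i.norm
      calc ‖∫ s in t..(1:ℝ), (g1 s - g1 1)‖ ≤ ∫ s in t..(1:ℝ), ‖g1 s - g1 1‖ :=
            intervalIntegral.norm_integral_le_integral_norm ht1.le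
        _ ≤ ∫ s in t..(1:ℝ), (∫ s' in t..(1:ℝ), ‖h1 s'‖) :=
            intervalIntegral.integral_mono_on ht1.le
              (hg1t.sub intervalIntegrable_const).norm intervalIntegrable_const hb
        _ = (1 - t) * ∫ s' in t..(1:ℝ), ‖h1 s'‖ := by
            simp [intervalIntegral.integral_const, smul_eq_mul]
    have b2 : ‖(∫ s in (0:ℝ)..(1 - t), g2 s) - (1 - t) • g2 0‖
        ≤ (1 - t) * ∫ s in (0:ℝ)..(1 - t), ‖h2 s‖ := by
      have hc : (∫ s in (0:ℝ)..(1 - t), g2 0) = (1 - t) • g2 0 := by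
        simp [intervalIntegral.integral_const]
      rw [← hc, ← intervalIntegral.integral_sub hg2t (intervalIntegrable_const)]
      have hb : ∀ s ∈ Set.Icc (0:ℝ) (1 - t), ‖g2 s - g2 0‖
          ≤ ∫ s' in (0:ℝ)..(1 - t), ‖h2 s'‖ := by
        intro s hs
        have e4 : g2 s - g2 0 = ∫ r in (0:ℝ)..s, h2 r := by
          rw [hg2 s ⟨hs.1, by linarith [hs.2]⟩]; ring
        rw [e4]
        calc ‖∫ r in (0:ℝ)..s, h2 r‖ ≤ ∫ r in (0:ℝ)..s, ‖h2 r‖ :=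
              intervalIntegral.norm_integral_le_integral_norm hs.1
          _ ≤ ∫ r in (0:ℝ)..(1 - t), ‖h2 r‖ := by
              apply intervalIntegral.integral_mono_interval le_rfl hs.1 hs.2
              · filter_upwards with r using norm_nonneg _
              · exact h2i.norm
      calc ‖∫ s in (0:ℝ)..(1 - t), (g2 s - g2 0)‖
            ≤ ∫ s in (0:ℝ)..(1 - t), ‖g2 s - g2 0‖ :=
            intervalIntegral.norm_integral_le_integral_norm (by linarith)
        _ ≤ ∫ s in (0:ℝ)..(1 - t), (∫ s' in (0:ℝ)..(1 - t), ‖h2 s'‖) :=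
            intervalIntegral.integral_mono_on (by linarith)
              (hg2t.sub intervalIntegrable_const).norm intervalIntegrable_const hb
        _ = (1 - t) * ∫ s' in (0:ℝ)..(1 - t), ‖h2 s'‖ := by
            simp [intervalIntegral.integral_const, smul_eq_mul]
    have comb : (1 - t) • (g1 1 + g2 0)
        = ((1 - t) • g1 1 - ∫ s in t..(1:ℝ), g1 s)
          + ((1 - t) • g2 0 - ∫ s in (0:ℝ)..(1 - t), g2 s) := by
      rw [rel]; module
    have hkey : ‖(1 - t) • (g1 1 + g2 0)‖
        ≤ (1 - t) * ((∫ s in t..(1:ℝ), ‖h1 s‖) + ∫ s in (0:ℝ)..(1 - t), ‖h2 s‖) := by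
      rw [comb]
      calc _ ≤ ‖(1 - t) • g1 1 - ∫ s in t..(1:ℝ), g1 s‖
              + ‖(1 - t) • g2 0 - ∫ s in (0:ℝ)..(1 - t), g2 s‖ := norm_add_le _ _
        _ ≤ (1 - t) * (∫ s in t..(1:ℝ), ‖h1 s‖) + (1 - t) * ∫ s in (0:ℝ)..(1 - t), ‖h2 s‖ := by
            rw [norm_sub_rev, norm_sub_rev (((1:ℝ) - t) • g2 0)]
            exact add_le_add b1 b2
        _ = _ := by ring
    rw [norm_smul, Real.norm_eq_abs, abs_of_pos (by linarith : (0:ℝ) < 1 - t)] at hkey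
    exact le_of_mul_le_mul_left (by linarith [hkey]) (by linarith : (0:ℝ) < 1 - t)
  have hseq : Filter.Tendsto (fun n : ℕ => 1 - (1:ℝ) / (n + 2)) Filter.atTop (nhds 1) := by
    have hA : Filter.Tendsto (fun n : ℕ => (n:ℝ) + 2) Filter.atTop Filter.atTop :=
      Filter.tendsto_atTop_add_const_right _ 2 tendsto_natCast_atTop_atTop
    have h0 : Filter.Tendsto (fun n : ℕ => (1:ℝ) / (n + 2)) Filter.atTop (nhds 0) := by
      simpa [one_div, Pi.inv_def] using hA.inv_tendsto_atTop
    simpa using (tendsto_const_nhds (x := (1:ℝ))).sub h0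
  have hmem : ∀ n : ℕ, 1 - (1:ℝ) / (n + 2) ∈ Set.Ioo (0:ℝ) 1 := by
    intro n
    have hpos : (0:ℝ) < 1 / (n + 2) := by positivity
    have h2 : (1:ℝ) / (n + 2) ≤ 1 / 2 := by
      apply div_le_div_of_nonneg_left one_pos.le two_pos
      exact_mod_cast by linarith [Nat.cast_nonneg (α := ℝ) n]
    exact ⟨by linarith, by linarith⟩
  have hP1 : ContinuousOn (fun t => ∫ s in (0:ℝ)..t, ‖h1 s‖) (Set.Icc (0:ℝ) 1) := by
    have := intervalIntegral.continuousOn_primitive_interval (a := (0:ℝ)) (b := 1)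
      (f := fun s => ‖h1 s‖) (μ := volume) (by
        rw [Set.uIcc_of_le zero_le_one]
        exact (intervalIntegrable_iff_integrableOn_Icc_of_le zero_le_one).mp hh1i.norm)
    rwa [Set.uIcc_of_le zero_le_one] at this
  have hP2 : ContinuousOn (fun t => ∫ s in (0:ℝ)..t, ‖h2 s‖) (Set.Icc (0:ℝ) 1) := by
    have := intervalIntegral.continuousOn_primitive_interval (a := (0:ℝ)) (b := 1)
      (f := fun s => ‖h2 s‖) (μ := volume) (by
        rw [Set.uIcc_of_le zero_le_one]
        exact (intervalIntegrable_iff_integrableOn_Icc_of_le zero_le_one).mp hh2i.norm)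
    rwa [Set.uIcc_of_le zero_le_one] at this
  set B : ℝ → ℝ := fun t => ((∫ s in (0:ℝ)..1, ‖h1 s‖) - ∫ s in (0:ℝ)..t, ‖h1 s‖)
    + ∫ s in (0:ℝ)..(1 - t), ‖h2 s‖ with hB
  have hBeq : ∀ t ∈ Set.Ioo (0:ℝ) 1, B t
      = (∫ s in t..(1:ℝ), ‖h1 s‖) + ∫ s in (0:ℝ)..(1 - t), ‖h2 s‖ := by
    intro t ht
    have e1 : (∫ s in (0:ℝ)..t, ‖h1 s‖) + (∫ s in t..(1:ℝ), ‖h1 s‖)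
        = ∫ s in (0:ℝ)..1, ‖h1 s‖ :=
      intervalIntegral.integral_add_adjacent_intervals
        (II.mono' hh1i.norm le_rfl ht.2.le ht.1.le)
        (II.mono' hh1i.norm ht.1.le le_rfl ht.2.le)
    rw [hB]; dsimp only; linarith
  have hBtend : Filter.Tendsto (fun n : ℕ => B (1 - 1 / (n + 2))) Filter.atTop (nhds 0) := by
    have t1 : Filter.Tendsto (fun n : ℕ => ∫ s in (0:ℝ)..(1 - 1/((n:ℝ)+2)), ‖h1 s‖)
        Filter.atTop (nhds (∫ s in (0:ℝ)..1, ‖h1 s‖)) := by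
      apply ((hP1 1 (by norm_num)).tendsto).comp
      rw [tendsto_nhdsWithin_iff]
      exact ⟨hseq, Filter.Eventually.of_forall fun n => Set.mem_Icc.mpr
        ⟨(hmem n).1.le, (hmem n).2.le⟩⟩
    have t2 : Filter.Tendsto (fun n : ℕ => ∫ s in (0:ℝ)..(1 - (1 - 1/((n:ℝ)+2))), ‖h2 s‖)
        Filter.atTop (nhds (∫ s in (0:ℝ)..(0:ℝ), ‖h2 s‖)) := by
      apply ((hP2 0 (by norm_num)).tendsto).comp
      rw [tendsto_nhdsWithin_iff]
      constructor
      · have hA : Filter.Tendsto (fun n : ℕ => (n:ℝ) + 2) Filter.atTop Filter.atTop :=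
          Filter.tendsto_atTop_add_const_right _ 2 tendsto_natCast_atTop_atTop
        have h0 : Filter.Tendsto (fun n : ℕ => (1:ℝ) / (n + 2)) Filter.atTop (nhds 0) := by
          simpa [one_div, Pi.inv_def] using hA.inv_tendsto_atTop
        simpa using h0
      · refine Filter.Eventually.of_forall fun n => Set.mem_Icc.mpr ?_
        have := hmem n
        exact ⟨by linarith [this.2], by linarith [this.1]⟩
    have hsum := ((tendsto_const_nhds
      (x := (∫ s in (0:ℝ)..1, ‖h1 s‖)) (f := Filter.atTop (α := ℕ))).sub t1).add t2
    rw [hB]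
    simpa using hsum
  have hle : ∀ n : ℕ, ‖g1 1 + g2 0‖ ≤ B (1 - 1/(n+2)) := by
    intro n
    rw [hBeq _ (hmem n)]
    exact key _ (hmem n)
  have hnn : ‖g1 1 + g2 0‖ ≤ 0 :=
    ge_of_tendsto' hBtend hle
  have hz : g1 1 + g2 0 = 0 := norm_eq_zero.mp (le_antisymm hnn (norm_nonneg _))
  exact eq_neg_of_add_eq_zero_left hz

def nn2 (φ : ℝ → ℂ) : ℝ≥0∞ := ∫⁻ t in Set.Ioo (0:ℝ) 1, ((‖φ t‖₊ : ℝ≥0∞)) ^ 2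

def n2r (φ : ℝ → ℂ) : ℝ := (nn2 φ).toReal

lemma n2r_nonneg (φ : ℝ → ℂ) : 0 ≤ n2r φ := ENNReal.toReal_nonneg

lemma two_rpow (x : ℝ≥0∞) : x ^ (2:ℝ) = x ^ (2:ℕ) := by
  rw [show (2:ℝ) = ((2:ℕ):ℝ) by norm_num, ENNReal.rpow_natCast]

lemma prod_bound (φ ψ : ℝ → ℂ)
    (hφm : AEStronglyMeasurable φ (volume.restrict (Set.Ioo (0:ℝ) 1)))
    (hψm : AEStronglyMeasurable ψ (volume.restrict (Set.Ioo (0:ℝ) 1)))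
    (hfφ : nn2 φ ≠ ⊤) (hfψ : nn2 ψ ≠ ⊤)
    (hint : IntegrableOn (fun t => φ t * ψ t) (Set.Ioo (0:ℝ) 1) volume) :
    ∫ t in Set.Ioo (0:ℝ) 1, ‖φ t * ψ t‖ ≤ Real.sqrt (n2r φ) * Real.sqrt (n2r ψ) := by
  have hconj : Real.HolderConjugate 2 2 := Real.HolderConjugate.two_two
  have h1 : ENNReal.ofReal (∫ t in Set.Ioo (0:ℝ) 1, ‖φ t * ψ t‖)
      = ∫⁻ t in Set.Ioo (0:ℝ) 1, ‖φ t * ψ t‖ₑ :=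
    ofReal_integral_norm_eq_lintegral_enorm hint
  have h2 : (∫⁻ t in Set.Ioo (0:ℝ) 1, ‖φ t * ψ t‖ₑ)
      = ∫⁻ t in Set.Ioo (0:ℝ) 1,
        (((fun t => ‖φ t‖ₑ) * fun t => ‖ψ t‖ₑ) t) := by
    apply lintegral_congr; intro t
    simp [enorm_mul]
  have h3 := ENNReal.lintegral_mul_le_Lp_mul_Lq (volume.restrict (Set.Ioo (0:ℝ) 1)) hconj
    hφm.enorm hψm.enorm
  simp only [two_rpow] at h3
  have h4 : ENNReal.ofReal (∫ t in Set.Ioo (0:ℝ) 1, ‖φ t * ψ t‖)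
      ≤ (nn2 φ) ^ (1/2 : ℝ) * (nn2 ψ) ^ (1/2 : ℝ) := by
    rw [h1, h2]; exact h3
  have h5 : ((nn2 φ) ^ (1/2 : ℝ) * (nn2 ψ) ^ (1/2 : ℝ)) ≠ ⊤ := by
    apply ENNReal.mul_ne_top <;>
      simp [ENNReal.rpow_eq_top_iff, hfφ, hfψ]
  have h6 := ENNReal.toReal_mono h5 h4
  rw [ENNReal.toReal_ofReal (by positivity)] at h6
  calc ∫ t in Set.Ioo (0:ℝ) 1, ‖φ t * ψ t‖ ≤ _ := h6
    _ = Real.sqrt (n2r φ) * Real.sqrt (n2r ψ) := by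
      rw [ENNReal.toReal_mul, ← ENNReal.toReal_rpow, ← ENNReal.toReal_rpow,
        ← Real.sqrt_eq_rpow, ← Real.sqrt_eq_rpow]
      rfl

lemma m1_bound (φ : ℝ → ℂ)
    (hφm : AEStronglyMeasurable φ (volume.restrict (Set.Ioo (0:ℝ) 1)))
    (hfφ : nn2 φ ≠ ⊤) (hint : IntegrableOn φ (Set.Ioo (0:ℝ) 1) volume) :
    ∫ t in Set.Ioo (0:ℝ) 1, ‖φ t‖ ≤ Real.sqrt (n2r φ) := by
  have h1 : nn2 (fun _ => (1:ℂ)) = 1 := by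
    simp [nn2, Real.volume_Ioo]
  have := prod_bound φ (fun _ => (1:ℂ)) hφm aestronglyMeasurable_const hfφ (by simp [h1])
    (by simpa using hint)
  simp only [mul_one] at this
  calc (∫ t in Set.Ioo (0:ℝ) 1, ‖φ t‖) ≤ Real.sqrt (n2r φ) * Real.sqrt (n2r fun _ => (1:ℂ)) :=
        this
    _ = Real.sqrt (n2r φ) := by
      simp [n2r, h1]

lemma sqrt_mul_le {a b : ℝ} (ha : 0 ≤ a) (hb : 0 ≤ b) :
    Real.sqrt a * Real.sqrt b ≤ (a + b) / 2 := by
  nlinarith [Real.sq_sqrt ha, Real.sq_sqrt hb, sq_nonneg (Real.sqrt a - Real.sqrt b),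
    Real.sqrt_nonneg a, Real.sqrt_nonneg b]

lemma sqrt_le_one_add {a : ℝ} (ha : 0 ≤ a) : Real.sqrt a ≤ 1 + a := by
  nlinarith [Real.sq_sqrt ha, Real.sqrt_nonneg a, sq_nonneg (Real.sqrt a - 1)]

lemma val0_bound (φ ψ : ℝ → ℂ)
    (hrep : ∀ t ∈ Set.Icc (0:ℝ) 1, φ t = φ 0 + ∫ s in (0:ℝ)..t, ψ s)
    (hψi : IntervalIntegrable ψ volume 0 1)
    (hfφ : nn2 φ ≠ ⊤) (hfψ : nn2 ψ ≠ ⊤) :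
    ‖φ 0‖ ≤ Real.sqrt (n2r φ) + Real.sqrt (n2r ψ) := by
  have hcont : ContinuousOn φ (Set.Icc (0:ℝ) 1) := rep_continuousOn φ ψ hψi hrep
  have hφint : IntegrableOn φ (Set.Ioo (0:ℝ) 1) volume :=
    (hcont.integrableOn_Icc).mono_set Set.Ioo_subset_Icc_self
  have hψint : IntegrableOn ψ (Set.Ioo (0:ℝ) 1) volume :=
    ((intervalIntegrable_iff_integrableOn_Ioc_of_le zero_le_one).mp hψi).mono_set
      Set.Ioo_subset_Ioc_self
  have hφm : AEStronglyMeasurable φ (volume.restrict (Set.Ioo (0:ℝ) 1)) := hφint.1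
  have hψm : AEStronglyMeasurable ψ (volume.restrict (Set.Ioo (0:ℝ) 1)) := hψint.1
  set Cψ : ℝ := ∫ s in (0:ℝ)..1, ‖ψ s‖ with hCψ
  have hpt : ∀ t ∈ Set.Ioo (0:ℝ) 1, ‖φ 0‖ ≤ ‖φ t‖ + Cψ := by
    intro t ht
    have h0 : φ 0 = φ t - ∫ s in (0:ℝ)..t, ψ s := by
      rw [hrep t ⟨ht.1.le, ht.2.le⟩]; ring
    rw [h0]
    have h2 : ‖∫ s in (0:ℝ)..t, ψ s‖ ≤ Cψ := by
      calc ‖∫ s in (0:ℝ)..t, ψ s‖ ≤ ∫ s in (0:ℝ)..t, ‖ψ s‖ :=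
            intervalIntegral.norm_integral_le_integral_norm ht.1.le
        _ ≤ Cψ := by
          apply intervalIntegral.integral_mono_interval le_rfl ht.1.le ht.2.le
          · filter_upwards with r using norm_nonneg _
          · exact hψi.norm
    calc ‖φ t - ∫ s in (0:ℝ)..t, ψ s‖ ≤ ‖φ t‖ + ‖∫ s in (0:ℝ)..t, ψ s‖ := norm_sub_le _ _
      _ ≤ ‖φ t‖ + Cψ := by linarith
  have hmeas1 : (volume (Set.Ioo (0:ℝ) 1)).toReal = 1 := by
    simp [Real.volume_Ioo]
  have hint1 : ‖φ 0‖ = ∫ _t in Set.Ioo (0:ℝ) 1, ‖φ 0‖ := by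
    rw [setIntegral_const, measureReal_def, hmeas1, one_smul]
  have hint2 : (∫ t in Set.Ioo (0:ℝ) 1, ‖φ 0‖)
      ≤ ∫ t in Set.Ioo (0:ℝ) 1, (‖φ t‖ + Cψ) := by
    apply setIntegral_mono_on (integrableOn_const (by simp [Real.volume_Ioo]))
      (hφint.norm.add (integrableOn_const (by simp [Real.volume_Ioo])))
      measurableSet_Ioo
    exact hpt
  have hint3 : (∫ t in Set.Ioo (0:ℝ) 1, (‖φ t‖ + Cψ))
      = (∫ t in Set.Ioo (0:ℝ) 1, ‖φ t‖) + Cψ := by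
    rw [MeasureTheory.integral_add hφint.norm
      (integrableOn_const (by simp [Real.volume_Ioo]))]
    rw [setIntegral_const, measureReal_def, hmeas1, one_smul]
  have hb1 : (∫ t in Set.Ioo (0:ℝ) 1, ‖φ t‖) ≤ Real.sqrt (n2r φ) :=
    m1_bound φ hφm hfφ hφint
  have hb2 : Cψ ≤ Real.sqrt (n2r ψ) := by
    rw [hCψ, intervalIntegral.integral_of_le zero_le_one, integral_Ioc_eq_integral_Ioo]
    exact m1_bound ψ hψm hfψ hψint
  rw [hint1]
  calc _ ≤ (∫ t in Set.Ioo (0:ℝ) 1, ‖φ t‖) + Cψ := by rw [← hint3]; exact hint2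
    _ ≤ Real.sqrt (n2r φ) + Real.sqrt (n2r ψ) := add_le_add hb1 hb2

lemma prod_sqrt_le {a b e f S : ℝ} (ha : 0 ≤ a) (hb : 0 ≤ b) (he : 0 ≤ e) (hf : 0 ≤ f)
    (hS : a + b + e + f ≤ S) :
    (Real.sqrt a + Real.sqrt b) * (Real.sqrt e + Real.sqrt f) ≤ S := by
  have h1 := sqrt_mul_le ha he
  have h2 := sqrt_mul_le ha hf
  have h3 := sqrt_mul_le hb he
  have h4 := sqrt_mul_le hb hf
  nlinarith [Real.sqrt_nonneg a, Real.sqrt_nonneg b, Real.sqrt_nonneg e, Real.sqrt_nonneg f]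

lemma int_bound (φ ψ F : ℝ → ℂ) (hφc : ContinuousOn φ (Set.Icc (0:ℝ) 1))
    (hψi : IntervalIntegrable ψ volume 0 1) (hfφ : nn2 φ ≠ ⊤) (hfψ : nn2 ψ ≠ ⊤)
    (hF : ∀ t, ‖F t‖ = ‖φ t * ψ t‖) :
    ‖∫ t in (0:ℝ)..1, F t‖ ≤ Real.sqrt (n2r φ) * Real.sqrt (n2r ψ) := by
  have h1 : ‖∫ t in (0:ℝ)..1, F t‖ ≤ ∫ t in (0:ℝ)..1, ‖F t‖ :=
    intervalIntegral.norm_integral_le_integral_norm zero_le_one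
  have h2 : (∫ t in (0:ℝ)..1, ‖F t‖) = ∫ t in Set.Ioo (0:ℝ) 1, ‖φ t * ψ t‖ := by
    rw [intervalIntegral.integral_of_le zero_le_one, integral_Ioc_eq_integral_Ioo]
    exact setIntegral_congr_fun measurableSet_Ioo fun t _ => hF t
  have hφm : AEStronglyMeasurable φ (volume.restrict (Set.Ioo (0:ℝ) 1)) :=
    (hφc.mono Set.Ioo_subset_Icc_self).aestronglyMeasurable measurableSet_Ioo
  have hψint : IntegrableOn ψ (Set.Ioc (0:ℝ) 1) volume :=
    (intervalIntegrable_iff_integrableOn_Ioc_of_le zero_le_one).mp hψi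
  have hψm : AEStronglyMeasurable ψ (volume.restrict (Set.Ioo (0:ℝ) 1)) :=
    hψint.1.mono_measure (Measure.restrict_mono Set.Ioo_subset_Ioc_self le_rfl)
  have hprodII : IntervalIntegrable (fun t => φ t * ψ t) volume 0 1 :=
    hψi.continuousOn_mul (by rwa [Set.uIcc_of_le zero_le_one])
  have hprod : IntegrableOn (fun t => φ t * ψ t) (Set.Ioo (0:ℝ) 1) volume :=
    ((intervalIntegrable_iff_integrableOn_Ioc_of_le zero_le_one).mp hprodII).mono_set
      Set.Ioo_subset_Ioc_self
  rw [h2] at h1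
  exact h1.trans (prod_bound φ ψ hφm hψm hfφ hfψ hprod)


namespace Network

variable {V : Type} [Countable V] [MeasurableSpace V] [DiscreteMeasurableSpace V]

lemma c_nonneg (N : Network V) (x y : V) : 0 ≤ N.c x y := by
  by_cases h : N.adj x y
  · exact (N.c_pos x y h).le
  · rw [N.c_eq_zero x y h]

lemma l2_extract (N : Network V) {f : V → V → ℝ → ℂ}
    (hm : MemLp (fun p : (V × V) × ℝ => f p.1.1 p.1.2 p.2) 2 N.edgeMeasure) :
    Summable (fun e : V × V => N.c e.1 e.2 * n2r (f e.1 e.2)) ∧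
    ∀ x y : V, N.adj x y → nn2 (f x y) ≠ ⊤ := by
  have h2 := (eLpNorm_lt_top_iff_lintegral_rpow_enorm_lt_top
    (f := fun p : (V × V) × ℝ => f p.1.1 p.1.2 p.2) (μ := N.edgeMeasure)
    (by norm_num) (by norm_num)).mp hm.2
  have htr : (2:ℝ≥0∞).toReal = (2:ℝ) := by norm_num
  rw [htr] at h2
  simp only [two_rpow] at h2
  have key : ∀ e : V × V,
      (∫⁻ p, (‖f p.1.1 p.1.2 p.2‖ₑ) ^ (2:ℕ)
        ∂(Measure.map (fun t => (e, t))
          ((ENNReal.ofReal (N.c e.1 e.2 / 2)) • (volume.restrict (Set.Ioo (0:ℝ) 1)))))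
      = ENNReal.ofReal (N.c e.1 e.2 / 2) * nn2 (f e.1 e.2) := by
    intro e
    rw [(measurableEmbedding_prodMk_left e).lintegral_map, lintegral_smul_measure]
    rfl
  rw [Network.edgeMeasure, lintegral_sum_measure] at h2
  rw [tsum_congr key] at h2
  constructor
  · have hs := ENNReal.summable_toReal h2.ne
    have heq : ∀ e : V × V,
        ((ENNReal.ofReal (N.c e.1 e.2 / 2)) * nn2 (f e.1 e.2)).toReal
        = N.c e.1 e.2 / 2 * n2r (f e.1 e.2) := by
      intro e
      rw [ENNReal.toReal_mul, ENNReal.toReal_ofReal (div_nonneg (N.c_nonneg e.1 e.2) two_pos.le)]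
      rfl
    have hs2 : Summable (fun e : V × V => N.c e.1 e.2 / 2 * n2r (f e.1 e.2)) :=
      hs.congr heq
    exact (hs2.mul_left 2).congr fun e => by ring
  · intro x y hxy hcon
    have hle := ENNReal.le_tsum (f := fun e : V × V =>
      (ENNReal.ofReal (N.c e.1 e.2 / 2)) * nn2 (f e.1 e.2)) (x, y)
    rw [hcon, ENNReal.mul_top (by
      simp only [ne_eq, ENNReal.ofReal_eq_zero, not_le]
      linarith [N.c_pos x y hxy])] at hle
    exact absurd (eq_top_iff.mpr hle) h2.ne

end Network


end GreenAux

set_option maxHeartbeats 4000000 in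
/-- For all `F, G ∈ dom S` there holds the Green identity
`⟨F,SG⟩_{L²(X¹,m¹)} - ⟨SF,G⟩_{L²(X¹,m¹)} = ⟨ΓF,Γ'G⟩_{ℓ²(X⁰,m⁰)} - ⟨Γ'F,ΓG⟩_{ℓ²(X⁰,m⁰)}`.
Here `F, G` are described by edgewise-`H²` representatives `fF, fG` (with first and second
derivatives `gF, hF` and `gG, hG`), continuous at the vertices with vertex values `φF, φG`
and compatible with the identification `(xy,t) ≡ (yx,1-t)`; `SF = -fF''`, `SG = -fG''`;
all inner products are written out explicitly (conjugate-linear in the first argument). -/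
theorem green_identity
    {V : Type} [Countable V] [MeasurableSpace V] [DiscreteMeasurableSpace V]
    (N : Network V)
    (fF gF hF fG gG hG : V → V → ℝ → ℂ)
    (hrepF : N.IsH2Rep fF gF hF) (hrepG : N.IsH2Rep fG gG hG)
    (hsymmF : ∀ x y, N.adj x y → ∀ t ∈ Set.Icc (0:ℝ) 1, fF x y t = fF y x (1 - t))
    (hsymmG : ∀ x y, N.adj x y → ∀ t ∈ Set.Icc (0:ℝ) 1, fG x y t = fG y x (1 - t))
    (φF φG : V → ℂ)
    (hφF : ∀ x y, N.adj x y → φF x = fF x y 0)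
    (hφG : ∀ x y, N.adj x y → φG x = fG x y 0)
    (hφF0 : ∀ x, (∀ y, ¬ N.adj x y) → φF x = 0)
    (hφG0 : ∀ x, (∀ y, ¬ N.adj x y) → φG x = 0) :
    ((1/2 : ℂ) * ∑' x, ∑' y, (N.c x y : ℂ) *
        ∫ t in (0:ℝ)..1, (starRingEnd ℂ) (fF x y t) * (-(hG x y t)))
      - ((1/2 : ℂ) * ∑' x, ∑' y, (N.c x y : ℂ) *
        ∫ t in (0:ℝ)..1, (starRingEnd ℂ) (-(hF x y t)) * fG x y t)
    = (∑' x, (N.m0 x : ℂ) * (starRingEnd ℂ) (φF x) *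
        ((N.m0 x : ℂ)⁻¹ * ∑' y, (N.c x y : ℂ) * gG x y 0))
      - (∑' x, (N.m0 x : ℂ) *
          (starRingEnd ℂ) ((N.m0 x : ℂ)⁻¹ * ∑' y, (N.c x y : ℂ) * gF x y 0) * φG x) := by
  classical
  obtain ⟨sfF, finfF⟩ := N.l2_extract hrepF.memL2_f
  obtain ⟨sgF, fingF⟩ := N.l2_extract hrepF.memL2_g
  obtain ⟨shF, finhF⟩ := N.l2_extract hrepF.memL2_h
  obtain ⟨sfG, finfG⟩ := N.l2_extract hrepG.memL2_f
  obtain ⟨sgG, fingG⟩ := N.l2_extract hrepG.memL2_g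
  obtain ⟨shG, finhG⟩ := N.l2_extract hrepG.memL2_h
  set S6 : V × V → ℝ := fun e => n2r (fF e.1 e.2) + n2r (gF e.1 e.2) + n2r (hF e.1 e.2)
    + n2r (fG e.1 e.2) + n2r (gG e.1 e.2) + n2r (hG e.1 e.2) with hS6
  set M : V × V → ℝ := fun e => N.c e.1 e.2 * (2 * S6 e) with hMdef
  have hS6nn : ∀ e : V × V, 0 ≤ S6 e := by
    intro e
    have h1 := n2r_nonneg (fF e.1 e.2); have h2 := n2r_nonneg (gF e.1 e.2)
    have h3 := n2r_nonneg (hF e.1 e.2); have h4 := n2r_nonneg (fG e.1 e.2)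
    have h5 := n2r_nonneg (gG e.1 e.2); have h6 := n2r_nonneg (hG e.1 e.2)
    simp only [hS6]; linarith
  have hMs : Summable M := by
    have h := ((((sfF.add sgF).add shF).add sfG).add sgG).add shG
    exact (h.mul_left 2).congr fun e => by simp only [hMdef, hS6]; ring
  have contfF : ∀ x y, N.adj x y → ContinuousOn (fF x y) (Set.Icc (0:ℝ) 1) := fun x y h =>
    rep_continuousOn _ _ (hrepF.intervalIntegrable_g x y h) (hrepF.ftc₁ x y h)
  have contgF : ∀ x y, N.adj x y → ContinuousOn (gF x y) (Set.Icc (0:ℝ) 1) := fun x y h =>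
    rep_continuousOn _ _ (hrepF.intervalIntegrable_h x y h) (hrepF.ftc₂ x y h)
  have contfG : ∀ x y, N.adj x y → ContinuousOn (fG x y) (Set.Icc (0:ℝ) 1) := fun x y h =>
    rep_continuousOn _ _ (hrepG.intervalIntegrable_g x y h) (hrepG.ftc₁ x y h)
  have contgG : ∀ x y, N.adj x y → ContinuousOn (gG x y) (Set.Icc (0:ℝ) 1) := fun x y h =>
    rep_continuousOn _ _ (hrepG.intervalIntegrable_h x y h) (hrepG.ftc₂ x y h)
  set P : V × V → ℂ := fun e => (N.c e.1 e.2 : ℂ) *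
      ∫ t in (0:ℝ)..1, (starRingEnd ℂ) (fF e.1 e.2 t) * (-(hG e.1 e.2 t)) with hPdef
  set Q : V × V → ℂ := fun e => (N.c e.1 e.2 : ℂ) *
      ∫ t in (0:ℝ)..1, (starRingEnd ℂ) (-(hF e.1 e.2 t)) * fG e.1 e.2 t with hQdef
  set Z : V × V → ℂ := fun e => (N.c e.1 e.2 : ℂ) *
      ((starRingEnd ℂ) (fF e.1 e.2 0) * gG e.1 e.2 0
        - (starRingEnd ℂ) (gF e.1 e.2 0) * fG e.1 e.2 0) with hZdef
  have hnormc : ∀ x y : V, ‖((N.c x y : ℝ) : ℂ)‖ = N.c x y := by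
    intro x y
    rw [Complex.norm_real, Real.norm_eq_abs, abs_of_nonneg (N.c_nonneg x y)]
  have hPb : ∀ e : V × V, ‖P e‖ ≤ M e := by
    rintro ⟨x, y⟩
    by_cases hxy : N.adj x y
    · have hb := int_bound (fF x y) (hG x y)
        (fun t => (starRingEnd ℂ) (fF x y t) * (-(hG x y t)))
        (contfF x y hxy) (hrepG.intervalIntegrable_h x y hxy) (finfF x y hxy) (finhG x y hxy)
        (fun t => by rw [norm_mul, norm_mul, RCLike.norm_conj, norm_neg])
      have hc := N.c_nonneg x y
      have h1 := n2r_nonneg (fF x y); have h2 := n2r_nonneg (hG x y)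
      have h3 := n2r_nonneg (gF x y); have h4 := n2r_nonneg (hF x y)
      have h5 := n2r_nonneg (fG x y); have h6 := n2r_nonneg (gG x y)
      have hsq : Real.sqrt (n2r (fF x y)) * Real.sqrt (n2r (hG x y)) ≤ 2 * S6 (x, y) := by
        have hab := sqrt_mul_le h1 h2
        simp only [hS6] at hab ⊢
        nlinarith
      calc ‖P (x, y)‖ = N.c x y * ‖∫ t in (0:ℝ)..1,
            (starRingEnd ℂ) (fF x y t) * (-(hG x y t))‖ := by
            simp only [hPdef, norm_mul]; rw [hnormc]
        _ ≤ N.c x y * (Real.sqrt (n2r (fF x y)) * Real.sqrt (n2r (hG x y))) :=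
            mul_le_mul_of_nonneg_left hb hc
        _ ≤ N.c x y * (2 * S6 (x, y)) := mul_le_mul_of_nonneg_left hsq hc
        _ = M (x, y) := by simp only [hMdef]
    · have hc0 : N.c x y = 0 := N.c_eq_zero x y hxy
      simp [hPdef, hMdef, hc0]
  have hQb : ∀ e : V × V, ‖Q e‖ ≤ M e := by
    rintro ⟨x, y⟩
    by_cases hxy : N.adj x y
    · have hb := int_bound (fG x y) (hF x y)
        (fun t => (starRingEnd ℂ) (-(hF x y t)) * fG x y t)
        (contfG x y hxy) (hrepF.intervalIntegrable_h x y hxy) (finfG x y hxy) (finhF x y hxy)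
        (fun t => by rw [norm_mul, norm_mul, RCLike.norm_conj, norm_neg, mul_comm])
      have hc := N.c_nonneg x y
      have h1 := n2r_nonneg (fF x y); have h2 := n2r_nonneg (hG x y)
      have h3 := n2r_nonneg (gF x y); have h4 := n2r_nonneg (hF x y)
      have h5 := n2r_nonneg (fG x y); have h6 := n2r_nonneg (gG x y)
      have hsq : Real.sqrt (n2r (fG x y)) * Real.sqrt (n2r (hF x y)) ≤ 2 * S6 (x, y) := by
        have hab := sqrt_mul_le h5 h4
        simp only [hS6] at hab ⊢
        nlinarith
      calc ‖Q (x, y)‖ = N.c x y * ‖∫ t in (0:ℝ)..1,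
            (starRingEnd ℂ) (-(hF x y t)) * fG x y t‖ := by
            simp only [hQdef, norm_mul]; rw [hnormc]
        _ ≤ N.c x y * (Real.sqrt (n2r (fG x y)) * Real.sqrt (n2r (hF x y))) :=
            mul_le_mul_of_nonneg_left hb hc
        _ ≤ N.c x y * (2 * S6 (x, y)) := mul_le_mul_of_nonneg_left hsq hc
        _ = M (x, y) := by simp only [hMdef]
    · have hc0 : N.c x y = 0 := N.c_eq_zero x y hxy
      simp [hQdef, hMdef, hc0]
  have vfF : ∀ x y, N.adj x y → ‖fF x y 0‖ ≤ Real.sqrt (n2r (fF x y)) + Real.sqrt (n2r (gF x y)) :=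
    fun x y h => val0_bound _ _ (hrepF.ftc₁ x y h) (hrepF.intervalIntegrable_g x y h)
      (finfF x y h) (fingF x y h)
  have vgF : ∀ x y, N.adj x y → ‖gF x y 0‖ ≤ Real.sqrt (n2r (gF x y)) + Real.sqrt (n2r (hF x y)) :=
    fun x y h => val0_bound _ _ (hrepF.ftc₂ x y h) (hrepF.intervalIntegrable_h x y h)
      (fingF x y h) (finhF x y h)
  have vfG : ∀ x y, N.adj x y → ‖fG x y 0‖ ≤ Real.sqrt (n2r (fG x y)) + Real.sqrt (n2r (gG x y)) :=
    fun x y h => val0_bound _ _ (hrepG.ftc₁ x y h) (hrepG.intervalIntegrable_g x y h)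
      (finfG x y h) (fingG x y h)
  have vgG : ∀ x y, N.adj x y → ‖gG x y 0‖ ≤ Real.sqrt (n2r (gG x y)) + Real.sqrt (n2r (hG x y)) :=
    fun x y h => val0_bound _ _ (hrepG.ftc₂ x y h) (hrepG.intervalIntegrable_h x y h)
      (fingG x y h) (finhG x y h)
  have prod1 : ∀ x y, N.adj x y → ‖fF x y 0‖ * ‖gG x y 0‖ ≤ S6 (x, y) := by
    intro x y h
    have h1 := n2r_nonneg (fF x y); have h2 := n2r_nonneg (hG x y)
    have h3 := n2r_nonneg (gF x y); have h4 := n2r_nonneg (hF x y)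
    have h5 := n2r_nonneg (fG x y); have h6 := n2r_nonneg (gG x y)
    have hmm : ‖fF x y 0‖ * ‖gG x y 0‖
        ≤ (Real.sqrt (n2r (fF x y)) + Real.sqrt (n2r (gF x y)))
          * (Real.sqrt (n2r (gG x y)) + Real.sqrt (n2r (hG x y))) :=
      mul_le_mul (vfF x y h) (vgG x y h) (norm_nonneg _) (by positivity)
    refine hmm.trans (prod_sqrt_le h1 h3 h6 h2 ?_)
    simp only [hS6]; linarith
  have prod2 : ∀ x y, N.adj x y → ‖gF x y 0‖ * ‖fG x y 0‖ ≤ S6 (x, y) := by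
    intro x y h
    have h1 := n2r_nonneg (fF x y); have h2 := n2r_nonneg (hG x y)
    have h3 := n2r_nonneg (gF x y); have h4 := n2r_nonneg (hF x y)
    have h5 := n2r_nonneg (fG x y); have h6 := n2r_nonneg (gG x y)
    have hmm : ‖gF x y 0‖ * ‖fG x y 0‖
        ≤ (Real.sqrt (n2r (gF x y)) + Real.sqrt (n2r (hF x y)))
          * (Real.sqrt (n2r (fG x y)) + Real.sqrt (n2r (gG x y))) :=
      mul_le_mul (vgF x y h) (vfG x y h) (norm_nonneg _) (by positivity)
    refine hmm.trans (prod_sqrt_le h3 h4 h5 h6 ?_)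
    simp only [hS6]; linarith
  have hZb : ∀ e : V × V, ‖Z e‖ ≤ M e := by
    rintro ⟨x, y⟩
    by_cases hxy : N.adj x y
    · have hc := N.c_nonneg x y
      have hcore : ‖(starRingEnd ℂ) (fF x y 0) * gG x y 0
          - (starRingEnd ℂ) (gF x y 0) * fG x y 0‖ ≤ 2 * S6 (x, y) := by
        have htri := norm_sub_le ((starRingEnd ℂ) (fF x y 0) * gG x y 0)
          ((starRingEnd ℂ) (gF x y 0) * fG x y 0)
        rw [norm_mul, norm_mul, RCLike.norm_conj, RCLike.norm_conj] at htri
        have p1 := prod1 x y hxy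
        have p2 := prod2 x y hxy
        linarith
      calc ‖Z (x, y)‖ = N.c x y * ‖(starRingEnd ℂ) (fF x y 0) * gG x y 0
            - (starRingEnd ℂ) (gF x y 0) * fG x y 0‖ := by
            simp only [hZdef, norm_mul]; rw [hnormc]
        _ ≤ N.c x y * (2 * S6 (x, y)) := mul_le_mul_of_nonneg_left hcore hc
        _ = M (x, y) := by simp only [hMdef]
    · simp [hZdef, hMdef, N.c_eq_zero x y hxy]
  have hPs : Summable P := Summable.of_norm_bounded hMs hPb
  have hQs : Summable Q := Summable.of_norm_bounded hMs hQb
  have hZs : Summable Z := Summable.of_norm_bounded hMs hZb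
  have hZsw : Summable (fun e : V × V => Z (e.2, e.1)) :=
    ((Equiv.prodComm V V).summable_iff).mpr hZs
  have hPQZ : ∀ e : V × V, P e - Q e = Z e + Z (e.2, e.1) := by
    rintro ⟨x, y⟩
    by_cases hxy : N.adj x y
    · have hyx := N.adj_symm x y hxy
      have hgG1 : gG x y 1 = - gG y x 0 :=
        gflip (fG x y) (gG x y) (hG x y) (fG y x) (gG y x) (hG y x)
          (hrepG.ftc₁ x y hxy) (hrepG.ftc₂ x y hxy)
          (hrepG.intervalIntegrable_g x y hxy) (hrepG.intervalIntegrable_h x y hxy)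
          (hrepG.ftc₁ y x hyx) (hrepG.ftc₂ y x hyx)
          (hrepG.intervalIntegrable_g y x hyx) (hrepG.intervalIntegrable_h y x hyx)
          (hsymmG x y hxy)
      have hgF1 : gF x y 1 = - gF y x 0 :=
        gflip (fF x y) (gF x y) (hF x y) (fF y x) (gF y x) (hF y x)
          (hrepF.ftc₁ x y hxy) (hrepF.ftc₂ x y hxy)
          (hrepF.intervalIntegrable_g x y hxy) (hrepF.intervalIntegrable_h x y hxy)
          (hrepF.ftc₁ y x hyx) (hrepF.ftc₂ y x hyx)
          (hrepF.intervalIntegrable_g y x hyx) (hrepF.intervalIntegrable_h y x hyx)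
          (hsymmF x y hxy)
      have hfF1 : fF x y 1 = fF y x 0 := by
        have h := hsymmF x y hxy 1 ⟨zero_le_one, le_rfl⟩
        simpa using h
      have hfG1 : fG x y 1 = fG y x 0 := by
        have h := hsymmG x y hxy 1 ⟨zero_le_one, le_rfl⟩
        simpa using h
      have hibp := edge_ibp (fF x y) (gF x y) (hF x y) (fG x y) (gG x y) (hG x y)
        (hrepF.ftc₁ x y hxy) (hrepF.ftc₂ x y hxy)
        (hrepF.intervalIntegrable_g x y hxy) (hrepF.intervalIntegrable_h x y hxy)
        (hrepG.ftc₁ x y hxy) (hrepG.ftc₂ x y hxy)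
        (hrepG.intervalIntegrable_g x y hxy) (hrepG.intervalIntegrable_h x y hxy)
      have hcsym : N.c y x = N.c x y := (N.c_symm x y).symm
      simp only [hPdef, hQdef, hZdef]
      rw [← mul_sub, hibp, hfF1, hfG1, hgF1, hgG1, hcsym]
      simp only [map_neg]
      ring
    · have hc0 : N.c x y = 0 := N.c_eq_zero x y hxy
      have hc0' : N.c y x = 0 := N.c_eq_zero y x fun h => hxy (N.adj_symm y x h)
      simp [hPdef, hQdef, hZdef, hc0, hc0']
  have keyL : ((1/2 : ℂ) * ∑' x, ∑' y, (N.c x y : ℂ) *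
        ∫ t in (0:ℝ)..1, (starRingEnd ℂ) (fF x y t) * (-(hG x y t)))
      - ((1/2 : ℂ) * ∑' x, ∑' y, (N.c x y : ℂ) *
        ∫ t in (0:ℝ)..1, (starRingEnd ℂ) (-(hF x y t)) * fG x y t)
      = ∑' e : V × V, Z e := by
    have e1 : (∑' (x : V), ∑' (y : V), (N.c x y : ℂ) *
        ∫ t in (0:ℝ)..1, (starRingEnd ℂ) (fF x y t) * (-(hG x y t)))
        = ∑' e : V × V, P e :=
      (Summable.tsum_prod' hPs fun x => hPs.prod_factor x).symm
    have e2 : (∑' (x : V), ∑' (y : V), (N.c x y : ℂ) *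
        ∫ t in (0:ℝ)..1, (starRingEnd ℂ) (-(hF x y t)) * fG x y t)
        = ∑' e : V × V, Q e :=
      (Summable.tsum_prod' hQs fun x => hQs.prod_factor x).symm
    rw [e1, e2, ← mul_sub, ← Summable.tsum_sub hPs hQs, tsum_congr hPQZ, Summable.tsum_add hZs hZsw]
    have e3 : (∑' e : V × V, Z (e.2, e.1)) = ∑' e : V × V, Z e := by
      rw [← (Equiv.prodComm V V).tsum_eq Z]
      exact tsum_congr fun e => rfl
    rw [e3]
    ring
  set A2 : V × V → ℂ := fun e =>
      (starRingEnd ℂ) (φF e.1) * ((N.c e.1 e.2 : ℂ) * gG e.1 e.2 0) with hA2def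
  set B2 : V × V → ℂ := fun e =>
      (starRingEnd ℂ) ((N.c e.1 e.2 : ℂ) * gF e.1 e.2 0) * φG e.1 with hB2def
  have hZAB : ∀ e : V × V, Z e = A2 e - B2 e := by
    rintro ⟨x, y⟩
    by_cases hxy : N.adj x y
    · simp only [hZdef, hA2def, hB2def, map_mul, Complex.conj_ofReal,
        ← hφF x y hxy, ← hφG x y hxy]
      ring
    · simp [hZdef, hA2def, hB2def, N.c_eq_zero x y hxy]
  have hA2b : ∀ e : V × V, ‖A2 e‖ ≤ M e := by
    rintro ⟨x, y⟩
    by_cases hxy : N.adj x y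
    · have hc := N.c_nonneg x y
      have hp := prod1 x y hxy
      have hnn := hS6nn (x, y)
      calc ‖A2 (x, y)‖ = N.c x y * (‖fF x y 0‖ * ‖gG x y 0‖) := by
            simp only [hA2def, norm_mul, RCLike.norm_conj, hφF x y hxy]
            rw [hnormc]; ring
        _ ≤ N.c x y * (2 * S6 (x, y)) := by
            apply mul_le_mul_of_nonneg_left _ hc
            linarith
        _ = M (x, y) := by simp only [hMdef]
    · simp [hA2def, hMdef, N.c_eq_zero x y hxy]
  have hB2b : ∀ e : V × V, ‖B2 e‖ ≤ M e := by
    rintro ⟨x, y⟩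
    by_cases hxy : N.adj x y
    · have hc := N.c_nonneg x y
      have hp := prod2 x y hxy
      have hnn := hS6nn (x, y)
      calc ‖B2 (x, y)‖ = N.c x y * (‖gF x y 0‖ * ‖fG x y 0‖) := by
            simp only [hB2def, norm_mul, RCLike.norm_conj, hφG x y hxy]
            rw [hnormc]; ring
        _ ≤ N.c x y * (2 * S6 (x, y)) := by
            apply mul_le_mul_of_nonneg_left _ hc
            linarith
        _ = M (x, y) := by simp only [hMdef]
    · simp [hB2def, hMdef, N.c_eq_zero x y hxy]
  have hA2s : Summable A2 := Summable.of_norm_bounded hMs hA2b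
  have hB2s : Summable B2 := Summable.of_norm_bounded hMs hB2b
  have hAfib : ∀ x, Summable fun y => A2 (x, y) := fun x => hA2s.prod_factor x
  have hBfib : ∀ x, Summable fun y => B2 (x, y) := fun x => hB2s.prod_factor x
  have hAmarg : Summable (fun x => ∑' y, A2 (x, y)) :=
    ⟨_, hA2s.hasSum.prod_fiberwise fun x => (hAfib x).hasSum⟩
  have hBmarg : Summable (fun x => ∑' y, B2 (x, y)) :=
    ⟨_, hB2s.hasSum.prod_fiberwise fun x => (hBfib x).hasSum⟩
  have hm0zero : ∀ x : V, N.m0 x = 0 → (∀ y, N.c x y = 0) ∧ ∀ y, ¬ N.adj x y := by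
    intro x hm
    have hc : ∀ y, N.c x y = 0 := by
      intro y
      have hle : N.c x y ≤ ∑' z, N.c x z :=
        Summable.le_tsum (N.c_summable x) y fun z _ => N.c_nonneg x z
      have h0 : N.c x y ≤ 0 := by
        rw [show (∑' z, N.c x z) = N.m0 x from rfl, hm] at hle
        exact hle
      linarith [N.c_nonneg x y]
    refine ⟨hc, fun y ha => ?_⟩
    have hpos := N.c_pos x y ha
    rw [hc y] at hpos
    exact lt_irrefl 0 hpos
  have hRA : ∀ x : V, (N.m0 x : ℂ) * (starRingEnd ℂ) (φF x) *
      ((N.m0 x : ℂ)⁻¹ * ∑' y, (N.c x y : ℂ) * gG x y 0) = ∑' y, A2 (x, y) := by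
    intro x
    have hfib : (∑' y, A2 (x, y))
        = (starRingEnd ℂ) (φF x) * ∑' y, ((N.c x y : ℂ) * gG x y 0) := by
      simp only [hA2def]
      exact tsum_mul_left
    by_cases hm : N.m0 x = 0
    · obtain ⟨hc, hadj⟩ := hm0zero x hm
      rw [hfib]
      simp [hm, hφF0 x hadj, hc]
    · have hm' : (N.m0 x : ℂ) ≠ 0 := Complex.ofReal_ne_zero.mpr hm
      rw [hfib]
      field_simp
  have hRB : ∀ x : V, (N.m0 x : ℂ) *
      (starRingEnd ℂ) ((N.m0 x : ℂ)⁻¹ * ∑' y, (N.c x y : ℂ) * gF x y 0) * φG x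
      = ∑' y, B2 (x, y) := by
    intro x
    have hconj_t : (starRingEnd ℂ) (∑' y, (N.c x y : ℂ) * gF x y 0)
        = ∑' y, (starRingEnd ℂ) ((N.c x y : ℂ) * gF x y 0) := by
      exact tsum_star
    have hfib : (∑' y, B2 (x, y))
        = (∑' y, (starRingEnd ℂ) ((N.c x y : ℂ) * gF x y 0)) * φG x := by
      simp only [hB2def]
      exact tsum_mul_right
    by_cases hm : N.m0 x = 0
    · obtain ⟨hc, hadj⟩ := hm0zero x hm
      rw [hfib]
      simp [hm, hφG0 x hadj, hc]
    · have hm' : (N.m0 x : ℂ) ≠ 0 := Complex.ofReal_ne_zero.mpr hm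
      rw [hfib, map_mul, ← hconj_t, map_inv₀, Complex.conj_ofReal]
      field_simp
  have keyR : (∑' x, (N.m0 x : ℂ) * (starRingEnd ℂ) (φF x) *
        ((N.m0 x : ℂ)⁻¹ * ∑' y, (N.c x y : ℂ) * gG x y 0))
      - (∑' x, (N.m0 x : ℂ) *
          (starRingEnd ℂ) ((N.m0 x : ℂ)⁻¹ * ∑' y, (N.c x y : ℂ) * gF x y 0) * φG x)
      = ∑' e : V × V, Z e := by
    rw [tsum_congr hRA, tsum_congr hRB, ← Summable.tsum_sub hAmarg hBmarg]
    have e4 : ∀ x, (∑' y, A2 (x, y)) - (∑' y, B2 (x, y))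
        = ∑' y, Z (x, y) := by
      intro x
      rw [← Summable.tsum_sub (hAfib x) (hBfib x)]
      exact tsum_congr fun y => (hZAB (x, y)).symm
    have e5 : (fun x => (∑' y, A2 (x, y)) - (∑' y, B2 (x, y)))
        = fun x => ∑' y, Z (x, y) := funext e4
    rw [tsum_congr e4]
    exact (Summable.tsum_prod' hZs fun x => hZs.prod_factor x).symm
  rw [keyL, ← keyR]
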